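/- arXiv:1911.13179 — 8 statements merged into one kernel-verified Lean document; each statement's English description precedes it below -/
import Mathlib

section
/- Let f and g be convex functions on R^n with resolvents R_f = (λ∂f + I)^{-1} and R_g = (λ∂g + I)^{-1} for some λ > 0, and Cayley operators C_f = 2R_f − I, C_g = 2R_g − I. Then y is a fixed point of R_{f+g} (equivalently 0 ∈ ∂f(y) + ∂g(y)) if and only if there exists z with C_f(C_g(z)) = z and y = R_g(z). -/
open scoped RealInnerProductSpace

/-- Resolvent/Cayley correspondence for a sum of two convex functions:
`y` is a fixed point of the resolvent of `f+g` (equivalently `0 ∈ ∂f(y) + ∂g(y)`)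
iff `y = R_g z` for some fixed point `z` of `C_f ∘ C_g`. -/
theorem douglas_rachford_fixed_point_correspondence {n : ℕ}
    (f g : EuclideanSpace ℝ (Fin n) → ℝ) (lam : ℝ) (hlam : 0 < lam)
    (hf : ConvexOn ℝ Set.univ f) (hg : ConvexOn ℝ Set.univ g)
    (Rf Rg : EuclideanSpace ℝ (Fin n) → EuclideanSpace ℝ (Fin n))
    (hRf : ∀ z w, Rf z = w ↔ ∀ u, f u ≥ f w + ⟪lam⁻¹ • (z - w), u - w⟫)
    (hRg : ∀ z w, Rg z = w ↔ ∀ u, g u ≥ g w + ⟪lam⁻¹ • (z - w), u - w⟫)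
    (y : EuclideanSpace ℝ (Fin n)) :
    (∃ u v, (∀ z, f z ≥ f y + ⟪u, z - y⟫) ∧ (∀ z, g z ≥ g y + ⟪v, z - y⟫) ∧ u + v = 0)
      ↔ ∃ z, (2 : ℝ) • Rf ((2 : ℝ) • Rg z - z) - ((2 : ℝ) • Rg z - z) = z ∧ y = Rg z := by
  have hlam' : lam ≠ 0 := hlam.ne'
  constructor
  · rintro ⟨u, v, hu, hv, huv⟩
    have huv' : u = -v := eq_neg_of_add_eq_zero_left huv
    have hRgz : Rg (y + lam • v) = y := by
      rw [hRg]
      intro w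
      have hsc : lam⁻¹ • (y + lam • v - y) = v := by
        rw [add_sub_cancel_left, smul_smul, inv_mul_cancel₀ hlam', one_smul]
      rw [hsc]; exact hv w
    have h2 : (2 : ℝ) • Rg (y + lam • v) - (y + lam • v) = y + lam • u := by
      rw [hRgz, huv']; module
    have hRfy : Rf (y + lam • u) = y := by
      rw [hRf]
      intro w
      have hsc : lam⁻¹ • (y + lam • u - y) = u := by
        rw [add_sub_cancel_left, smul_smul, inv_mul_cancel₀ hlam', one_smul]
      rw [hsc]; exact hu w
    refine ⟨y + lam • v, ?_, hRgz.symm⟩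
    rw [h2, hRfy, huv']
    module
  · rintro ⟨z, hz, hy⟩
    have hyz : Rg z = y := hy.symm
    have hgv : ∀ w, g w ≥ g y + ⟪lam⁻¹ • (z - y), w - y⟫ := (hRg z y).mp hyz
    rw [hyz] at hz
    have hRfw : Rf ((2 : ℝ) • y - z) = y := by
      have h2 : (2 : ℝ) • Rf ((2 : ℝ) • y - z) = (2 : ℝ) • y := by
        have := hz
        rw [sub_eq_iff_eq_add] at this
        rw [this]; module
      have := smul_right_injective (EuclideanSpace ℝ (Fin n)) (two_ne_zero (α := ℝ)) h2
      exact this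
    have hfu : ∀ w, f w ≥ f y + ⟪lam⁻¹ • ((2 : ℝ) • y - z - y), w - y⟫ :=
      (hRf _ y).mp hRfw
    refine ⟨lam⁻¹ • ((2 : ℝ) • y - z - y), lam⁻¹ • (z - y), hfu, hgv, ?_⟩
    module
end

section
/- Let P_A be the orthogonal projection onto a linear subspace A of R^m and P_B any map on R^m. For any β ≠ 0, y is a fixed point of the RRR iteration y ↦ y + β(P_A(2P_B(y) − y) − P_B(y)) if and only if P_A(y) = P_B(y). -/
open scoped RealInnerProductSpace

/-- For any `β ≠ 0`, `y` is a fixed point of the RRR iteration iff `P_A y = P_B y`. -/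
theorem rrr_fixed_point_iff_solution {m : ℕ} (β : ℝ) (hβ : β ≠ 0)
    (PA : EuclideanSpace ℝ (Fin m) →ₗ[ℝ] EuclideanSpace ℝ (Fin m))
    (hidem : ∀ x, PA (PA x) = PA x)
    (hsa : ∀ x z, ⟪PA x, z⟫ = ⟪x, PA z⟫)
    (PB : EuclideanSpace ℝ (Fin m) → EuclideanSpace ℝ (Fin m))
    (y : EuclideanSpace ℝ (Fin m)) :
    y + β • (PA ((2 : ℝ) • PB y - y) - PB y) = y ↔ PA y = PB y := by
  rw [add_eq_left, smul_eq_zero, or_iff_right hβ, sub_eq_zero]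
  constructor
  · intro h
    have hfix : PA (PB y) = PB y := by rw [← h, hidem]
    have h2 := h
    rw [map_sub, map_smul, hfix] at h2
    linear_combination (norm := module) -h2
  · intro h
    have hfix : PA (PB y) = PB y := by rw [← h, hidem]
    rw [map_sub, map_smul, hfix, h, two_smul]
    module
end

section
/- Let y_0 ∈ R^m correspond to a solution (P_A(y_0) = P_B(y_0)) with d = min_i |y_0[i]| > 0. On the open ball {y : ‖y − y_0‖₂ < d}, the function f_R(y) = ‖y − P_A P_B(y)‖² − ½(‖y − P_A(y)‖² + ‖y − P_B(y)‖²) simplifies to ½(‖y − P_A(y_0)‖² − ‖(I − P_A)y‖²), which is a convex function of y with gradient ∇f_R(y) = P_A(y − y_0). -/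
open scoped RealInnerProductSpace

/-- Near a solution `y0` with nonvanishing coordinates, `f_R` simplifies to
`½(‖y − P_A y0‖² − ‖(I−P_A)y‖²)`, is convex on the ball, and has gradient
`P_A (y − y0)`. -/
theorem fR_local_form_convex_gradient {m : ℕ}
    (b : Fin m → ℝ) (hb : ∀ i, 0 < b i)
    (PA : EuclideanSpace ℝ (Fin m) →ₗ[ℝ] EuclideanSpace ℝ (Fin m))
    (hidem : ∀ x, PA (PA x) = PA x)
    (hsa : ∀ x z, ⟪PA x, z⟫ = ⟪x, PA z⟫)
    (PB : EuclideanSpace ℝ (Fin m) → EuclideanSpace ℝ (Fin m))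
    (hPB : ∀ y i, PB y i = b i * Real.sign (y i))
    (fR : EuclideanSpace ℝ (Fin m) → ℝ)
    (hfR : ∀ y, fR y = ‖y - PA (PB y)‖ ^ 2
      - (1 / 2) * (‖y - PA y‖ ^ 2 + ‖y - PB y‖ ^ 2))
    (y0 : EuclideanSpace ℝ (Fin m)) (hsol : PA y0 = PB y0)
    (d : ℝ) (hd : 0 < d) (hdmin : ∀ i, d ≤ |y0 i|) :
    (∀ y ∈ Metric.ball y0 d,
        fR y = (1 / 2) * (‖y - PA y0‖ ^ 2 - ‖y - PA y‖ ^ 2)) ∧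
    ConvexOn ℝ (Metric.ball y0 d) fR ∧
    (∀ y ∈ Metric.ball y0 d, HasGradientAt fR (PA (y - y0)) y) := by
  -- coordinate bound
  have hcoord : ∀ (x : EuclideanSpace ℝ (Fin m)) (i : Fin m), |x i| ≤ ‖x‖ := by
    intro x i
    rw [EuclideanSpace.norm_eq]
    rw [show |x i| = Real.sqrt (|x i| ^ 2) by
      rw [Real.sqrt_sq (abs_nonneg _)]]
    apply Real.sqrt_le_sqrt
    exact Finset.single_le_sum (f := fun j => |x j| ^ 2) (fun j _ => sq_nonneg _) (Finset.mem_univ i)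
  -- on the ball the sign pattern is fixed, so PB y = PA y0
  have hPBy : ∀ y ∈ Metric.ball y0 d, PB y = PA y0 := by
    intro y hy
    ext i
    have h1 : |y i - y0 i| < |y0 i| := by
      calc |y i - y0 i| = |(y - y0) i| := by simp [PiLp.sub_apply]
        _ ≤ ‖y - y0‖ := hcoord _ i
        _ < d := by rwa [Metric.mem_ball, dist_eq_norm] at hy
        _ ≤ |y0 i| := hdmin i
    have hsign : Real.sign (y i) = Real.sign (y0 i) := by
      rcases lt_trichotomy (y0 i) 0 with h | h | h
      · have : y i < 0 := by
          have := abs_lt.mp h1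
          rw [abs_of_neg h] at this; linarith [this.2]
        rw [Real.sign_of_neg this, Real.sign_of_neg h]
      · exact absurd (hdmin i) (by rw [h, abs_zero]; linarith)
      · have : 0 < y i := by
          have := abs_lt.mp h1
          rw [abs_of_pos h] at this; linarith [this.1]
        rw [Real.sign_of_pos this, Real.sign_of_pos h]
    rw [hsol]
    rw [hPB y i, hPB y0 i, hsign]
  -- the local formula
  have hform : ∀ y ∈ Metric.ball y0 d,
      fR y = (1 / 2) * (‖y - PA y0‖ ^ 2 - ‖y - PA y‖ ^ 2) := by
    intro y hy
    rw [hfR y, hPBy y hy, hidem]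
    ring
  -- projection inner identities
  have hPAinner : ∀ u v : EuclideanSpace ℝ (Fin m), ⟪PA u, PA v⟫ = ⟪u, PA v⟫ := by
    intro u v
    rw [hsa, hidem]
  -- key quadratic identity
  have hkey : ∀ y : EuclideanSpace ℝ (Fin m),
      ‖y - PA y0‖ ^ 2 - ‖y - PA y‖ ^ 2 = ‖PA (y - y0)‖ ^ 2 := by
    intro y
    have e1 := @norm_sub_sq_real (EuclideanSpace ℝ (Fin m)) _ _ y (PA y0)
    have e2 := @norm_sub_sq_real (EuclideanSpace ℝ (Fin m)) _ _ y (PA y)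
    have e3 : ‖PA (y - y0)‖ ^ 2
        = ‖PA y‖ ^ 2 - 2 * ⟪PA y, PA y0⟫ + ‖PA y0‖ ^ 2 := by
      rw [map_sub]
      exact @norm_sub_sq_real (EuclideanSpace ℝ (Fin m)) _ _ (PA y) (PA y0)
    have i1 : ⟪y, PA y⟫ = ‖PA y‖ ^ 2 := by
      rw [← hPAinner y y, real_inner_self_eq_norm_sq]
    have i2 : ⟪PA y, PA y0⟫ = ⟪y, PA y0⟫ := hPAinner y y0
    rw [e1, e2, e3, i1, i2]
    ring
  -- the local model g
  set g : EuclideanSpace ℝ (Fin m) → ℝ := fun y => (1 / 2) * ‖PA (y - y0)‖ ^ 2 with hg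
  have heq : ∀ y ∈ Metric.ball y0 d, fR y = g y := by
    intro y hy
    rw [hform y hy, hg]
    simp only [← hkey y]
  -- convexity of g on the ball
  have hconvg : ConvexOn ℝ (Metric.ball y0 d) g := by
    refine ⟨convex_ball _ _, ?_⟩
    intro x hx y hy a c ha hc hac
    have h0 : a • y0 + c • y0 = y0 := Convex.combo_self hac y0
    have h1 : (a • x + c • y) - y0 = a • (x - y0) + c • (y - y0) := by
      have h2 : a • (x - y0) + c • (y - y0) = a • x + c • y - (a • y0 + c • y0) := by
        rw [smul_sub, smul_sub]; abel
      rw [h2, h0]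
    have h2 : ‖PA ((a • x + c • y) - y0)‖
        ≤ a * ‖PA (x - y0)‖ + c * ‖PA (y - y0)‖ := by
      rw [h1, map_add, map_smul, map_smul]
      calc ‖a • PA (x - y0) + c • PA (y - y0)‖
          ≤ ‖a • PA (x - y0)‖ + ‖c • PA (y - y0)‖ := norm_add_le _ _
        _ = a * ‖PA (x - y0)‖ + c * ‖PA (y - y0)‖ := by
            rw [norm_smul, norm_smul, Real.norm_of_nonneg ha, Real.norm_of_nonneg hc]
    have hn1 : (0:ℝ) ≤ ‖PA ((a • x + c • y) - y0)‖ := norm_nonneg _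
    have hn2 : (0:ℝ) ≤ ‖PA (x - y0)‖ := norm_nonneg _
    have hn3 : (0:ℝ) ≤ ‖PA (y - y0)‖ := norm_nonneg _
    simp only [hg, smul_eq_mul]
    nlinarith [sq_nonneg (‖PA (x - y0)‖ - ‖PA (y - y0)‖), mul_nonneg ha hc]
  have hconv : ConvexOn ℝ (Metric.ball y0 d) fR := by
    refine ⟨convex_ball _ _, ?_⟩
    intro x hx y hy a c ha hc hac
    have hmem : a • x + c • y ∈ Metric.ball y0 d :=
      (convex_ball y0 d) hx hy ha hc hac
    rw [heq _ hmem, heq _ hx, heq _ hy]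
    exact hconvg.2 hx hy ha hc hac
  refine ⟨hform, hconv, ?_⟩
  -- gradient
  intro y hy
  set PAc : EuclideanSpace ℝ (Fin m) →L[ℝ] EuclideanSpace ℝ (Fin m) :=
    LinearMap.toContinuousLinearMap PA with hPAc
  have hPAcapp : ∀ x, PAc x = PA x := fun x => rfl
  have hF : HasFDerivAt (fun z => PAc (z - y0)) PAc y := by
    have h := PAc.hasFDerivAt.comp y ((hasFDerivAt_id y).sub_const y0)
    rw [ContinuousLinearMap.comp_id] at h
    exact h
  have hinner : HasFDerivAt (fun z : EuclideanSpace ℝ (Fin m) => ⟪PAc (z - y0), PAc (z - y0)⟫)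
      ((fderivInnerCLM ℝ (PAc (y - y0), PAc (y - y0))).comp (PAc.prod PAc)) y :=
    hF.inner ℝ hF
  have hGg : HasFDerivAt g
      ((1 / 2 : ℝ) • ((fderivInnerCLM ℝ (PAc (y - y0), PAc (y - y0))).comp (PAc.prod PAc))) y := by
    have h' := hinner.const_smul (1 / 2 : ℝ)
    have : g = fun z : EuclideanSpace ℝ (Fin m) =>
        (1 / 2 : ℝ) • ⟪PAc (z - y0), PAc (z - y0)⟫ := by
      funext z
      show (1 / 2 : ℝ) * ‖PA (z - y0)‖ ^ 2 = (1 / 2 : ℝ) * ⟪PA (z - y0), PA (z - y0)⟫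
      rw [real_inner_self_eq_norm_sq]
    rw [this]
    exact h'
  -- identify the derivative with the dual of the gradient
  have hLeq : ((1 / 2 : ℝ) • ((fderivInnerCLM ℝ (PAc (y - y0), PAc (y - y0))).comp (PAc.prod PAc)))
      = InnerProductSpace.toDual ℝ (EuclideanSpace ℝ (Fin m)) (PA (y - y0)) := by
    apply ContinuousLinearMap.ext
    intro h
    simp only [ContinuousLinearMap.smul_apply, ContinuousLinearMap.comp_apply,
      ContinuousLinearMap.prod_apply, fderivInnerCLM_apply, InnerProductSpace.toDual_apply_apply,
      smul_eq_mul]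
    have a1 : ⟪PAc (y - y0), PAc h⟫ = ⟪PA (y - y0), h⟫ := by
      rw [hPAcapp, hPAcapp, hPAinner, ← hsa]
    have a2 : ⟪PAc h, PAc (y - y0)⟫ = ⟪PA (y - y0), h⟫ := by
      rw [hPAcapp, hPAcapp, real_inner_comm, hPAinner, ← hsa]
    rw [a1, a2, real_inner_comm]
    ring
  have hGg' : HasFDerivAt g
      (InnerProductSpace.toDual ℝ (EuclideanSpace ℝ (Fin m)) (PA (y - y0))) y := hLeq ▸ hGg
  have hev : fR =ᶠ[nhds y] g := by
    filter_upwards [Metric.isOpen_ball.mem_nhds hy] with z hz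
    exact heq z hz
  rw [hasGradientAt_iff_hasFDerivAt]
  exact hGg'.congr_of_eventuallyEq hev
end

section
/- Let y_0 correspond to a solution with d = min_i |y_0[i]| > 0, and let β ∈ (0,2). If ‖y^{(0)} − y_0‖₂ < d, then the RRR iterates y^{(t)} = y^{(t-1)} − β P_A(y^{(t-1)} − y_0) satisfy ‖y^{(t)} − y_0‖₂² = (1−β)^{2t} ‖P_A(y^{(0)} − y_0)‖² + ‖(I−P_A)(y^{(0)} − y_0)‖², remain in the ball of radius d, and converge linearly to y_∞ = P_A(y_0) + (I − P_A)(y^{(0)}), which is a fixed point of RRR. If β = 1 the limit is reached in one iteration. -/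
open scoped RealInnerProductSpace

/-- Local linear convergence of RRR near a solution. Within the ball of radius
`d` around `y0`, the RRR iterates `y_{t+1} = y_t − β P_A(y_t − y0)` satisfy an
explicit error formula, stay in the ball, and converge to the fixed point
`y_∞ = P_A y0 + (I − P_A) y_0`; if `β = 1` the limit is reached in one step. -/
theorem rrr_local_linear_convergence {m : ℕ}
    (PA : EuclideanSpace ℝ (Fin m) →ₗ[ℝ] EuclideanSpace ℝ (Fin m))
    (hidem : ∀ x, PA (PA x) = PA x)
    (hsa : ∀ x z, ⟪PA x, z⟫ = ⟪x, PA z⟫)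
    (y0 : EuclideanSpace ℝ (Fin m))
    (d : ℝ) (hd : 0 < d)
    (β : ℝ) (hβ : β ∈ Set.Ioo (0 : ℝ) 2)
    (y : ℕ → EuclideanSpace ℝ (Fin m))
    (hinit : ‖y 0 - y0‖ < d)
    (hiter : ∀ t, y (t + 1) = y t - β • PA (y t - y0)) :
    (∀ t, ‖y t - y0‖ ^ 2
        = (1 - β) ^ (2 * t) * ‖PA (y 0 - y0)‖ ^ 2
          + ‖(y 0 - y0) - PA (y 0 - y0)‖ ^ 2) ∧
    (∀ t, ‖y t - y0‖ < d) ∧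
    Filter.Tendsto y Filter.atTop (nhds (PA y0 + (y 0 - PA (y 0)))) ∧
    (PA y0 + (y 0 - PA (y 0))) - β • PA ((PA y0 + (y 0 - PA (y 0))) - y0)
      = PA y0 + (y 0 - PA (y 0)) ∧
    (β = 1 → y 1 = PA y0 + (y 0 - PA (y 0))) := by
  obtain ⟨hβ0, hβ2⟩ := hβ
  set u : EuclideanSpace ℝ (Fin m) := PA (y 0 - y0) with hu
  set w : EuclideanSpace ℝ (Fin m) := (y 0 - y0) - PA (y 0 - y0) with hw
  -- key error formula
  have key : ∀ t, y t - y0 = (1 - β) ^ t • u + w := by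
    intro t
    induction t with
    | zero => simp [hu, hw]
    | succ t ih =>
      have hPAu : PA u = u := hidem _
      have hPAw : PA w = 0 := by
        simp [hw, map_sub, hidem]
      have h1 : y (t + 1) - y0 = (y t - y0) - β • PA (y t - y0) := by
        rw [hiter t]; abel
      rw [h1, ih]
      have h2 : PA ((1 - β) ^ t • u + w) = (1 - β) ^ t • u := by
        rw [map_add, map_smul, hPAu, hPAw, add_zero]
      rw [h2, pow_succ]
      module
  have horth : ⟪u, w⟫ = 0 := by
    rw [hsa, hw, map_sub, hidem, sub_self, inner_zero_right]
  have hnorm : ∀ t, ‖y t - y0‖ ^ 2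
      = (1 - β) ^ (2 * t) * ‖u‖ ^ 2 + ‖w‖ ^ 2 := by
    intro t
    rw [key t, norm_add_sq_real, inner_smul_left, horth]
    simp only [RingHom.id_apply, mul_zero, add_zero]
    rw [norm_smul]
    have : (1 - β) ^ (2 * t) = (|(1 - β) ^ t|) ^ 2 := by
      rw [sq_abs, ← pow_mul, Nat.mul_comm]
    rw [this]
    simp [Real.norm_eq_abs, mul_pow]
  have habs : |1 - β| < 1 := abs_lt.mpr ⟨by linarith, by linarith⟩
  refine ⟨hnorm, ?_, ?_, ?_, ?_⟩
  · intro t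
    have h1 : ‖y t - y0‖ ^ 2 ≤ ‖y 0 - y0‖ ^ 2 := by
      rw [hnorm t, hnorm 0]
      have hle : (1 - β) ^ (2 * t) ≤ 1 := by
        calc (1 - β) ^ (2 * t) ≤ |(1 - β) ^ (2 * t)| := le_abs_self _
        _ = |1 - β| ^ (2 * t) := by rw [abs_pow]
        _ ≤ 1 := pow_le_one₀ (abs_nonneg _) habs.le
      have := mul_le_mul_of_nonneg_right hle (sq_nonneg ‖u‖)
      simp only [Nat.mul_zero, pow_zero, one_mul]
      linarith
    have h2 : ‖y 0 - y0‖ ^ 2 < d ^ 2 :=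
      pow_lt_pow_left₀ hinit (norm_nonneg _) two_ne_zero
    have := lt_of_le_of_lt h1 h2
    exact lt_of_pow_lt_pow_left₀ 2 hd.le this
  · have hL : PA y0 + (y 0 - PA (y 0)) = y0 + w := by
      rw [hw, map_sub]; abel
    have hyt : ∀ t, y t = (y0 + w) + (1 - β) ^ t • u := by
      intro t
      have := key t
      have : y t = y0 + ((1 - β) ^ t • u + w) := by
        rw [← this]; abel
      rw [this]; abel
    rw [hL]
    have htend : Filter.Tendsto (fun t : ℕ => (1 - β) ^ t) Filter.atTop (nhds 0) :=
      tendsto_pow_atTop_nhds_zero_of_abs_lt_one habs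
    have := Filter.Tendsto.add (tendsto_const_nhds (x := y0 + w) (f := Filter.atTop))
      (htend.smul_const u)
    simp only [zero_smul, add_zero] at this
    exact (funext hyt : y = _) ▸ this
  · have : PA ((PA y0 + (y 0 - PA (y 0))) - y0) = 0 := by
      simp only [map_add, map_sub, hidem]
      abel
    rw [this, smul_zero, sub_zero]
  · intro hβ1
    rw [hiter 0, hβ1, one_smul, map_sub]
    abel
end

section
/- Suppose d = min_i |(Ax_0)[i]| > 0 and ‖∇f_R(y)‖₂ < ε where ε < min(ε₁, d) (ε₁ as in the gap lemma) and additionally min_i |y[i]| ≥ ε. Then y_0 := P_B(y) + (I − P_A)(y) corresponds to a solution (P_A(y_0) = P_B(y_0)) and ‖y − y_0‖₂ < ε. -/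
open scoped RealInnerProductSpace

lemma coord_le_norm {m : ℕ} (v : EuclideanSpace ℝ (Fin m)) (i : Fin m) :
    |v i| ≤ ‖v‖ := by
  rw [EuclideanSpace.norm_eq]
  have h1 : |v i| = Real.sqrt (‖v i‖ ^ 2) := by
    rw [Real.sqrt_sq_eq_abs]; simp
  rw [h1]
  apply Real.sqrt_le_sqrt
  exact Finset.single_le_sum (f := fun j => ‖v j‖ ^ 2) (fun j _ => by positivity)
    (Finset.mem_univ i)

lemma sign_eq_of_close {x z : ℝ} (hx : x ≠ 0) (h : |x - z| < |x|) :
    Real.sign z = Real.sign x := by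
  rcases lt_trichotomy x 0 with hlt | heq | hgt
  · rw [Real.sign_of_neg hlt, Real.sign_of_neg]
    rw [abs_of_neg hlt] at h
    cases abs_lt.mp h; linarith
  · exact absurd heq hx
  · rw [Real.sign_of_pos hgt, Real.sign_of_pos]
    rw [abs_of_pos hgt] at h
    cases abs_lt.mp h; linarith

/-- Stability of RRR: if the gradient is small and all coordinates of `y` are at
least `ε` in absolute value, then `y_0 = P_B y + (I − P_A) y` corresponds to a
solution and `‖y − y_0‖ < ε`. -/
theorem rrr_stability {m : ℕ}
    (b : Fin m → ℝ) (hb : ∀ i, 0 < b i)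
    (PA : EuclideanSpace ℝ (Fin m) →ₗ[ℝ] EuclideanSpace ℝ (Fin m))
    (hidem : ∀ x, PA (PA x) = PA x)
    (hsa : ∀ x z, ⟪PA x, z⟫ = ⟪x, PA z⟫)
    (PB : EuclideanSpace ℝ (Fin m) → EuclideanSpace ℝ (Fin m))
    (hPB : ∀ y i, PB y i = b i * Real.sign (y i))
    (d : ℝ) (hd : 0 < d) (hdmin : ∀ i, d ≤ b i)
    (ε₁ : ℝ) (hε₁pos : 0 < ε₁)
    (hε₁ : ∀ z : EuclideanSpace ℝ (Fin m),
      ‖PB z - PA (PB z)‖ < ε₁ → PA (PB z) = PB z)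
    (ε : ℝ) (hεpos : 0 < ε) (hεε₁ : ε < ε₁) (hεd : ε < d)
    (y : EuclideanSpace ℝ (Fin m))
    (hgrad : ‖PA y + PB y - (2 : ℝ) • PA (PB y)‖ < ε)
    (hylarge : ∀ i, ε ≤ |y i|) :
    PA (PB y + (y - PA y)) = PB (PB y + (y - PA y)) ∧
    ‖y - (PB y + (y - PA y))‖ < ε := by
  set g : EuclideanSpace ℝ (Fin m) := PA y + PB y - (2 : ℝ) • PA (PB y) with hgdef
  have hPAg : PA g = PA y - PA (PB y) := by
    rw [hgdef]
    rw [map_sub, map_add, map_smul, hidem, hidem]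
    module
  have hg2 : g - PA g = PB y - PA (PB y) := by
    rw [hPAg, hgdef]; module
  have horth : ⟪PA g, g - PA g⟫ = 0 := by
    rw [hsa]
    have : PA (g - PA g) = 0 := by rw [map_sub, hidem]; simp
    rw [this, inner_zero_right]
  have hpyth : ‖g‖ ^ 2 = ‖PA g‖ ^ 2 + ‖g - PA g‖ ^ 2 := by
    have h : g = PA g + (g - PA g) := by abel
    calc ‖g‖ ^ 2 = ‖PA g + (g - PA g)‖ ^ 2 := by rw [← h]
      _ = ‖PA g‖ ^ 2 + ‖g - PA g‖ ^ 2 := by rw [norm_add_sq_real, horth]; ring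
  have hgnn := norm_nonneg g
  have hBle : ‖g - PA g‖ ≤ ‖g‖ := by
    nlinarith [norm_nonneg (g - PA g), norm_nonneg (PA g)]
  have hAle : ‖PA g‖ ≤ ‖g‖ := by
    nlinarith [norm_nonneg (g - PA g), norm_nonneg (PA g)]
  have hBlt : ‖PB y - PA (PB y)‖ < ε := by rw [← hg2]; exact lt_of_le_of_lt hBle hgrad
  have hfix : PA (PB y) = PB y := hε₁ y (lt_trans hBlt hεε₁)
  have hAlt : ‖PA y - PB y‖ < ε := by
    rw [← hfix, ← hPAg]; exact lt_of_le_of_lt hAle hgrad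
  set y₀ : EuclideanSpace ℝ (Fin m) := PB y + (y - PA y) with hy₀
  have hdiff : y - y₀ = PA y - PB y := by rw [hy₀]; abel
  have hnorm : ‖y - y₀‖ < ε := by rw [hdiff]; exact hAlt
  refine ⟨?_, hnorm⟩
  have hsign : ∀ i, Real.sign (y₀ i) = Real.sign (y i) := by
    intro i
    have hyi : y i ≠ 0 := by
      intro h; have := hylarge i; rw [h] at this; simp at this; linarith
    apply sign_eq_of_close hyi
    have h1 : |y i - y₀ i| ≤ ‖y - y₀‖ := by
      have := coord_le_norm (y - y₀) i
      simpa using this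
    calc |y i - y₀ i| ≤ ‖y - y₀‖ := h1
      _ < ε := hnorm
      _ ≤ |y i| := hylarge i
  have hPBy₀ : PB y₀ = PB y := by
    refine PiLp.ext fun i => ?_
    rw [hPB, hPB, hsign i]
  have hPAy₀ : PA y₀ = PB y := by
    rw [hy₀, map_add, map_sub, hidem, hfix]; abel
  rw [hPAy₀, hPBy₀]
end

section
/- Fix y ∈ R^m and a direction d ∈ R^m with d[i] ≠ 0 for all i. If either P_A(d) ≠ 0, or (P_A(d) = 0 and ⟨d, P_B(y)⟩ > 0), then f_R(y − βd) → ∞ as β → ∞. -/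
open scoped RealInnerProductSpace

open Filter

private lemma sign_shift {a t β : ℝ} (ht : t ≠ 0) (h : |a| < β * |t|) :
    Real.sign (a - β * t) = - Real.sign t := by
  rcases ht.lt_or_gt with hneg | hpos
  · have h1 : 0 < a - β * t := by
      have habs : |t| = -t := abs_of_neg hneg
      rw [habs] at h
      linarith [neg_abs_le a]
    rw [Real.sign_of_pos h1, Real.sign_of_neg hneg]; norm_num
  · have h1 : a - β * t < 0 := by
      have habs : |t| = t := abs_of_pos hpos
      rw [habs] at h
      linarith [le_abs_self a]
    rw [Real.sign_of_neg h1, Real.sign_of_pos hpos]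

private lemma expand_lemma {m : ℕ}
    (PA : EuclideanSpace ℝ (Fin m) →ₗ[ℝ] EuclideanSpace ℝ (Fin m))
    (hidem : ∀ x, PA (PA x) = PA x)
    (hsa : ∀ x z, ⟪PA x, z⟫ = ⟪x, PA z⟫)
    (y d c : EuclideanSpace ℝ (Fin m)) (β : ℝ) :
    ‖y - β • d + PA c‖ ^ 2
      - (1 / 2) * (‖(y - β • d) - PA (y - β • d)‖ ^ 2 + ‖y - β • d + c‖ ^ 2)
    = (1/2) * ‖PA d‖ ^ 2 * β ^ 2
      + (-⟪PA y, PA d⟫ - 2 * ⟪d, PA c⟫ + ⟪d, c⟫) * β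
      + ((1/2) * ‖PA y‖ ^ 2 + 2 * ⟪y, PA c⟫ - ⟪y, c⟫ + ‖PA c‖ ^ 2
          - (1/2) * ‖c‖ ^ 2) := by
  have h1 : ∀ v : EuclideanSpace ℝ (Fin m), ‖v - PA v‖ ^ 2 = ‖v‖ ^ 2 - ‖PA v‖ ^ 2 := by
    intro v
    have hv : ⟪v, PA v⟫ = ‖PA v‖ ^ 2 := by
      rw [← real_inner_self_eq_norm_sq, hsa, hidem]
    rw [norm_sub_sq_real, hv]; ring
  have hPAu : PA (y - β • d) = PA y - β • PA d := by
    simp [map_sub, map_smul]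
  have hnorm : ‖PA (y - β • d)‖ ^ 2
      = ‖PA y‖ ^ 2 - 2 * β * ⟪PA y, PA d⟫ + β ^ 2 * ‖PA d‖ ^ 2 := by
    rw [hPAu, norm_sub_sq_real, real_inner_smul_right, norm_smul]
    simp [mul_pow, sq_abs]
    ring
  have hi1 : ⟪y - β • d, PA c⟫ = ⟪y, PA c⟫ - β * ⟪d, PA c⟫ := by
    rw [inner_sub_left, real_inner_smul_left]
  have hi2 : ⟪y - β • d, c⟫ = ⟪y, c⟫ - β * ⟪d, c⟫ := by
    rw [inner_sub_left, real_inner_smul_left]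
  rw [norm_add_sq_real, norm_add_sq_real, h1, hnorm, hi1, hi2]
  ring

/-- Escape lemma: along any direction `d` with all coordinates nonzero such that
`P_A d ≠ 0`, or `P_A d = 0` and `⟪d, P_B y⟫ > 0`, the objective `f_R(y − βd)`
tends to infinity as `β → ∞`. -/
theorem fR_escape_lemma {m : ℕ}
    (b : Fin m → ℝ) (hb : ∀ i, 0 < b i)
    (PA : EuclideanSpace ℝ (Fin m) →ₗ[ℝ] EuclideanSpace ℝ (Fin m))
    (hidem : ∀ x, PA (PA x) = PA x)
    (hsa : ∀ x z, ⟪PA x, z⟫ = ⟪x, PA z⟫)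
    (PB : EuclideanSpace ℝ (Fin m) → EuclideanSpace ℝ (Fin m))
    (hPB : ∀ y i, PB y i = b i * Real.sign (y i))
    (fR : EuclideanSpace ℝ (Fin m) → ℝ)
    (hfR : ∀ y, fR y = ‖y - PA (PB y)‖ ^ 2
      - (1 / 2) * (‖y - PA y‖ ^ 2 + ‖y - PB y‖ ^ 2))
    (y dir : EuclideanSpace ℝ (Fin m))
    (hdir : ∀ i, dir i ≠ 0)
    (hcond : PA dir ≠ 0 ∨ (PA dir = 0 ∧ (0 : ℝ) < ⟪dir, PB y⟫)) :
    Filter.Tendsto (fun β : ℝ => fR (y - β • dir)) Filter.atTop Filter.atTop := by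
  set c : EuclideanSpace ℝ (Fin m) := PB dir with hc
  set a : ℝ := ‖PA dir‖ ^ 2 with ha
  set L : ℝ := -⟪PA y, PA dir⟫ - 2 * ⟪dir, PA c⟫ + ⟪dir, c⟫ with hL
  set C : ℝ := (1/2) * ‖PA y‖ ^ 2 + 2 * ⟪y, PA c⟫ - ⟪y, c⟫ + ‖PA c‖ ^ 2
      - (1/2) * ‖c‖ ^ 2 with hC
  -- eventual equality with the quadratic
  have hev : ∀ᶠ β in atTop,
      fR (y - β • dir) = (1/2) * a * β ^ 2 + L * β + C := by
    have hcoord : ∀ᶠ β in atTop, ∀ i, |y i| < β * |dir i| := by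
      rw [Filter.eventually_all]
      intro i
      have ht : Filter.Tendsto (fun β : ℝ => β * |dir i|) atTop atTop :=
        Filter.tendsto_id.atTop_mul_const (abs_pos.mpr (hdir i))
      exact ht.eventually_gt_atTop _
    filter_upwards [hcoord] with β hβ
    have hPBu : PB (y - β • dir) = -c := by
      ext i
      have h1 : (y - β • dir) i = y i - β * dir i := by
        simp [PiLp.sub_apply, PiLp.smul_apply, smul_eq_mul]
      have h2 : (-c) i = -(b i * Real.sign (dir i)) := by
        simp [hc, hPB]
      rw [hPB, h1, h2, sign_shift (hdir i) (hβ i), mul_neg]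
    rw [hfR, hPBu, map_neg, sub_neg_eq_add, sub_neg_eq_add]
    exact expand_lemma PA hidem hsa y dir c β
  -- tendsto of the quadratic
  have hq : Filter.Tendsto (fun β : ℝ => (1/2) * a * β ^ 2 + L * β + C)
      atTop atTop := by
    rcases hcond with hne | ⟨hz, hpos⟩
    · have hapos : 0 < a := by
        rw [ha]; exact pow_pos (norm_pos_iff.mpr hne) 2
      have : (fun β : ℝ => (1/2) * a * β ^ 2 + L * β + C)
          = fun β : ℝ => ((1/2) * a * β + L) * β + C := by
        funext β; ring
      rw [this]
      apply Filter.tendsto_atTop_add_const_right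
      apply Filter.Tendsto.atTop_mul_atTop₀ _ Filter.tendsto_id
      apply Filter.tendsto_atTop_add_const_right
      exact (Filter.tendsto_id.const_mul_atTop (by positivity))
    · -- PA dir = 0 case
      have hne : (Finset.univ : Finset (Fin m)).Nonempty := by
        rcases (Finset.univ : Finset (Fin m)).eq_empty_or_nonempty with h | h
        · exfalso
          have : ⟪dir, PB y⟫ = 0 := by
            rw [PiLp.inner_apply, h, Finset.sum_empty]
          linarith
        · exact h
      have hdc : 0 < ⟪dir, c⟫ := by
        rw [hc, PiLp.inner_apply]
        apply Finset.sum_pos _ hne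
        intro i _
        simp only [RCLike.inner_apply, conj_trivial, hPB]
        have hx : 0 < dir i * Real.sign (dir i) := by
          rcases (hdir i).lt_or_gt with h | h
          · rw [Real.sign_of_neg h]; nlinarith
          · rw [Real.sign_of_pos h]; nlinarith
        nlinarith [hb i]
      have ha0 : a = 0 := by rw [ha, hz]; simp
      have hL' : L = ⟪dir, c⟫ := by
        rw [hL, hz]
        have h1 : ⟪(0 : EuclideanSpace ℝ (Fin m)), c⟫ = ⟪dir, PA c⟫ := by
          rw [← hz, hsa]
        rw [← h1]
        simp
      have : (fun β : ℝ => (1/2) * a * β ^ 2 + L * β + C)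
          = fun β : ℝ => ⟪dir, c⟫ * β + C := by
        funext β; rw [ha0, hL']; ring
      rw [this]
      apply Filter.tendsto_atTop_add_const_right
      exact Filter.tendsto_id.const_mul_atTop hdc
  exact Filter.Tendsto.congr' (hev.mono fun β h => h.symm) hq
end

section
/- Let g = ∇f_R(y) = P_A(y) + P_B(y) − 2P_A P_B(y). If P_A(g) = 0, then ⟨g, P_B(y)⟩ = ‖(I − P_A)P_B(y)‖₂² ≥ 0, and this inner product is zero only if P_A(y) = P_B(y) (i.e., y corresponds to a solution, in which case g = 0). -/
open scoped RealInnerProductSpace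

/-- If `g = ∇f_R(y)` satisfies `P_A g = 0`, then `⟪g, P_B y⟫ = ‖(I−P_A)P_B y‖² ≥ 0`,
and this inner product vanishes only if `y` is a solution (in which case `g = 0`). -/
theorem gradient_direction_good {m : ℕ}
    (PA : EuclideanSpace ℝ (Fin m) →ₗ[ℝ] EuclideanSpace ℝ (Fin m))
    (hidem : ∀ x, PA (PA x) = PA x)
    (hsa : ∀ x z, ⟪PA x, z⟫ = ⟪x, PA z⟫)
    (PB : EuclideanSpace ℝ (Fin m) → EuclideanSpace ℝ (Fin m))
    (y : EuclideanSpace ℝ (Fin m))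
    (g : EuclideanSpace ℝ (Fin m))
    (hg : g = PA y + PB y - (2 : ℝ) • PA (PB y))
    (hPAg : PA g = 0) :
    ⟪g, PB y⟫ = ‖PB y - PA (PB y)‖ ^ 2 ∧ (0 : ℝ) ≤ ⟪g, PB y⟫ ∧
    (⟪g, PB y⟫ = 0 → PA y = PB y ∧ g = 0) := by
  have hPAy : PA y = PA (PB y) := by
    have h : PA g = PA y - PA (PB y) := by
      rw [hg]; simp [map_add, map_sub, map_smul, hidem, two_smul]
    rw [hPAg] at h
    exact (sub_eq_zero.mp h.symm)
  have hgeq : g = PB y - PA (PB y) := by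
    rw [hg, hPAy, two_smul]; abel
  have hinner : ⟪g, PB y⟫ = ⟪g, g⟫ := by
    have : ⟪g, PA (PB y)⟫ = 0 := by
      rw [← hsa, hPAg]
      simp [real_inner_comm]
    calc ⟪g, PB y⟫ = ⟪g, g + PA (PB y)⟫ := by rw [hgeq]; congr 1; abel
      _ = ⟪g, g⟫ + ⟪g, PA (PB y)⟫ := inner_add_right _ _ _
      _ = ⟪g, g⟫ := by rw [this, add_zero]
  have hnorm : ⟪g, PB y⟫ = ‖PB y - PA (PB y)‖ ^ 2 := by
    rw [hinner, ← hgeq, real_inner_self_eq_norm_sq]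
  refine ⟨hnorm, hnorm ▸ sq_nonneg _, fun h0 => ?_⟩
  have hg0 : g = 0 := by
    have : ⟪g, g⟫ = 0 := by rw [← hinner, h0]
    exact inner_self_eq_zero.mp this
  have hPB : PB y = PA (PB y) := by
    have := hgeq; rw [hg0] at this; exact (sub_eq_zero.mp this.symm)
  exact ⟨by rw [hPAy, ← hPB], hg0⟩
end

section
/- For every y ∈ R^m with ∇f_R(y)[i] ≠ 0 for all i and y not a solution (P_A(y) ≠ P_B(y)), there exists β > 0 such that f_R(y − β∇f_R(y)) > 0. -/
open scoped RealInnerProductSpace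

lemma aux_quad (A B C β : ℝ) (hA : 0 < A) (hβ2 : 1 ≤ β) (h4 : |B| + |C| + 1 ≤ β * A) :
    0 < A*β^2 + B*β + C := by
  have hβnn : (0:ℝ) ≤ β := by linarith
  nlinarith [mul_le_mul_of_nonneg_right h4 hβnn,
    mul_le_mul_of_nonneg_right (neg_abs_le B) hβnn,
    mul_le_mul_of_nonneg_left hβ2 (abs_nonneg C), neg_abs_le C]

lemma aux_lin (B C β : ℝ) (hB : 0 < B) (h4 : |C| + 1 ≤ β * B) :
    0 < (0:ℝ)*β^2 + B*β + C := by
  nlinarith [neg_abs_le C]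

/-- For any `y` with nonvanishing gradient coordinates which is not a solution,
a large enough step along the negative gradient makes `f_R` positive. -/
theorem fR_positive_along_gradient {m : ℕ}
    (b : Fin m → ℝ) (hb : ∀ i, 0 < b i)
    (PA : EuclideanSpace ℝ (Fin m) →ₗ[ℝ] EuclideanSpace ℝ (Fin m))
    (hidem : ∀ x, PA (PA x) = PA x)
    (hsa : ∀ x z, ⟪PA x, z⟫ = ⟪x, PA z⟫)
    (PB : EuclideanSpace ℝ (Fin m) → EuclideanSpace ℝ (Fin m))
    (hPB : ∀ y i, PB y i = b i * Real.sign (y i))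
    (fR : EuclideanSpace ℝ (Fin m) → ℝ)
    (hfR : ∀ y, fR y = ‖y - PA (PB y)‖ ^ 2
      - (1 / 2) * (‖y - PA y‖ ^ 2 + ‖y - PB y‖ ^ 2))
    (y : EuclideanSpace ℝ (Fin m))
    (hgradnz : ∀ i, (PA y + PB y - (2 : ℝ) • PA (PB y)) i ≠ 0)
    (hnotsol : PA y ≠ PB y) :
    ∃ β > (0 : ℝ), 0 < fR (y - β • (PA y + PB y - (2 : ℝ) • PA (PB y))) := by
  classical
  set d : EuclideanSpace ℝ (Fin m) := PA y + PB y - (2 : ℝ) • PA (PB y) with hd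
  rcases Nat.eq_zero_or_pos m with hm | hm
  · subst hm
    exact absurd (PiLp.ext fun i => i.elim0) hnotsol
  haveI hne : Nonempty (Fin m) := ⟨⟨0, hm⟩⟩
  set w : EuclideanSpace ℝ (Fin m) := WithLp.toLp 2 (fun i => -(b i * Real.sign (d i)) : Fin m → ℝ) with hw
  have hwapp : ∀ i, w i = -(b i * Real.sign (d i)) := fun i => rfl
  set β₀ : ℝ := Finset.univ.sup' Finset.univ_nonempty (fun i => |y i| / |d i|) with hβ₀
  have hβ₀nn : 0 ≤ β₀ := by
    obtain ⟨i⟩ := hne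
    calc (0:ℝ) ≤ |y i| / |d i| := by positivity
    _ ≤ β₀ := by rw [hβ₀]; exact Finset.le_sup' (fun j => |y j| / |d j|) (Finset.mem_univ i)
  -- PB at shifted points
  have hPBz : ∀ β : ℝ, β₀ < β → PB (y - β • d) = w := by
    intro β hβ
    refine PiLp.ext fun i => ?_
    rw [hPB, hwapp]
    have hdi := hgradnz i
    have h1 : |y i| / |d i| < β :=
      lt_of_le_of_lt (Finset.le_sup' (fun i => |y i| / |d i|) (Finset.mem_univ i)) hβ
    have h2 : |y i| < β * |d i| := by
      rw [div_lt_iff₀ (abs_pos.mpr hdi)] at h1; linarith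
    have hz : (y - β • d) i = y i - β * d i := by simp
    rw [hz]
    rcases lt_or_gt_of_ne hdi with hneg | hpos
    · have hpos' : 0 < y i - β * d i := by
        rw [abs_of_neg hneg] at h2
        nlinarith [neg_abs_le (y i)]
      rw [Real.sign_of_pos hpos', Real.sign_of_neg hneg]; ring
    · have hneg' : y i - β * d i < 0 := by
        rw [abs_of_pos hpos] at h2
        nlinarith [le_abs_self (y i)]
      rw [Real.sign_of_neg hneg', Real.sign_of_pos hpos]; ring
  -- expansion of fR
  have hproj : ∀ u : EuclideanSpace ℝ (Fin m), ⟪u, PA u⟫ = ‖PA u‖ ^ 2 := by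
    intro u
    conv_lhs => rw [← hidem u]
    rw [← hsa, real_inner_self_eq_norm_sq]
  have hkey : ∀ z : EuclideanSpace ℝ (Fin m), fR z =
      (1/2)*‖PA z‖^2 + ⟪z, PB z⟫ - 2*⟪PA z, PB z⟫ + ‖PA (PB z)‖^2 - (1/2)*‖PB z‖^2 := by
    intro z
    rw [hfR]
    rw [norm_sub_sq_real, norm_sub_sq_real, norm_sub_sq_real, hproj z, ← hsa]
    ring
  set A : ℝ := (1/2)*‖PA d‖^2 with hA
  set B : ℝ := 2*⟪PA d, w⟫ - ⟪PA y, PA d⟫ - ⟪d, w⟫ with hB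
  set C : ℝ := (1/2)*‖PA y‖^2 + ⟪y, w⟫ - 2*⟪PA y, w⟫ + ‖PA w‖^2 - (1/2)*‖w‖^2 with hC
  have hpoly : ∀ β : ℝ, β₀ < β → fR (y - β • d) = A*β^2 + B*β + C := by
    intro β hβ
    rw [hkey, hPBz β hβ, map_sub, map_smul, hA, hB, hC]
    rw [norm_sub_sq_real]
    simp only [inner_sub_left, real_inner_smul_left, real_inner_smul_right, norm_smul,
      Real.norm_eq_abs, mul_pow, sq_abs]
    ring
  -- positivity of -⟪d, w⟫
  have hterm : ∀ i : Fin m, d i * w i = -(b i * |d i|) := by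
    intro i
    rw [hwapp]
    rcases lt_or_gt_of_ne (hgradnz i) with h | h
    · rw [Real.sign_of_neg h, abs_of_neg h]; ring
    · rw [Real.sign_of_pos h, abs_of_pos h]; ring
  have hdw : ⟪d, w⟫ = -∑ i, b i * |d i| := by
    rw [show ⟪d, w⟫ = ∑ i, d i * w i from by simp [PiLp.inner_apply, RCLike.inner_apply, mul_comm],
      Finset.sum_congr rfl fun i _ => hterm i, Finset.sum_neg_distrib]
  have hS : 0 < ∑ i, b i * |d i| := by
    refine Finset.sum_pos (fun i _ => ?_) Finset.univ_nonempty
    exact mul_pos (hb i) (abs_pos.mpr (hgradnz i))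
  by_cases h0 : PA d = 0
  · -- linear case
    have hA0 : A = 0 := by rw [hA, h0]; simp
    have hB0 : 0 < B := by
      rw [hB, h0, hdw]; simp [hS]
    refine ⟨max (β₀ + 1) ((|C| + 1)/B), ?_, ?_⟩
    · exact lt_of_lt_of_le (by linarith) (le_max_left _ _)
    · set β := max (β₀ + 1) ((|C| + 1)/B) with hβdef
      have hβ1 : β₀ < β := lt_of_lt_of_le (by linarith) (le_max_left _ _)
      have hβ2 : (|C| + 1)/B ≤ β := le_max_right _ _
      rw [hpoly β hβ1, hA0]
      exact aux_lin B C β hB0 ((div_le_iff₀ hB0).mp hβ2)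
  · have hApos : 0 < A := by
      rw [hA]
      have : 0 < ‖PA d‖ := norm_pos_iff.mpr h0
      positivity
    refine ⟨max (β₀ + 1) (max 1 ((|B| + |C| + 1)/A)), ?_, ?_⟩
    · exact lt_of_lt_of_le (by linarith) (le_max_left _ _)
    · set β := max (β₀ + 1) (max 1 ((|B| + |C| + 1)/A)) with hβdef
      have hβ1 : β₀ < β := lt_of_lt_of_le (by linarith) (le_max_left _ _)
      have hβ2 : 1 ≤ β := le_trans (le_max_left _ _) (le_max_right _ _)
      have hβ3 : (|B| + |C| + 1)/A ≤ β := le_trans (le_max_right _ _) (le_max_right _ _)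
      rw [hpoly β hβ1]
      exact aux_quad A B C β hApos hβ2 ((div_le_iff₀ hApos).mp hβ3)
end
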